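/- Let f̃, g̃ ∈ K(z) be rational functions of positive degree. Then the function P^1(K) → [0,1] given by z ↦ [f̃(z), g̃(z)]_{P^1} extends to a continuous function P^1_Berk(K) → [0,1]; this extension is unique since P^1(K) is dense in P^1_Berk(K). -/

import Mathlib

open scoped Classical

open Polynomial Filter MeasureTheory Topology

variable (K : Type*) [NontriviallyNormedField K] [IsAlgClosed K] [CompleteSpace K]
  [IsUltrametricDist K]

/-- The degree of a rational function: max of degrees of numerator and denominator. -/
noncomputable def rdeg (h : RatFunc K) : ℕ := max h.num.natDegree h.denom.natDegree

/-- Canonical homogeneous coordinates of a point of `P^1(K) = K ∪ {∞}`. -/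
noncomputable def homCoord : OnePoint K → K × K :=
  OnePoint.rec (1, 0) (fun a => (a, 1))

/-- The (normalized) chordal metric on `P^1(K)`:
`[z,w] = |z0*w1 - z1*w0| / (max(|z0|,|z1|) * max(|w0|,|w1|))`. -/
noncomputable def chordal (x y : OnePoint K) : ℝ :=
  ‖(homCoord K x).1 * (homCoord K y).2 - (homCoord K x).2 * (homCoord K y).1‖ /
    (max ‖(homCoord K x).1‖ ‖(homCoord K x).2‖ * max ‖(homCoord K y).1‖ ‖(homCoord K y).2‖)

/-- The action of a rational function on the projective line `P^1(K) = K ∪ {∞}`. -/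
noncomputable def evalP1 (h : RatFunc K) : OnePoint K → OnePoint K :=
  OnePoint.rec
    (if h.denom.natDegree < h.num.natDegree then OnePoint.infty
      else ((h.num.coeff h.denom.natDegree / h.denom.leadingCoeff : K) : OnePoint K))
    (fun a => if h.denom.eval a = 0 then OnePoint.infty
      else ((h.num.eval a / h.denom.eval a : K) : OnePoint K))

/-- Composition of rational functions. -/
noncomputable def rcomp (f g : RatFunc K) : RatFunc K :=
  RatFunc.eval (algebraMap K (RatFunc K)) g f

/-- Iterates of a rational function, as rational functions. -/
noncomputable def riter (f : RatFunc K) : ℕ → RatFunc K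
  | 0 => RatFunc.X
  | n + 1 => rcomp K f (riter f n)

/-- The Berkovich affine line `A^1(K)`: multiplicative seminorms on `K[z]`
whose restriction to `K` is the absolute value of `K`. -/
structure BerkA1 where
  /-- the seminorm, as a function on polynomials -/
  toFun : Polynomial K → ℝ
  nonneg' : ∀ p, 0 ≤ toFun p
  map_mul' : ∀ p q, toFun (p * q) = toFun p * toFun q
  add_le' : ∀ p q, toFun (p + q) ≤ toFun p + toFun q
  restricts' : ∀ c : K, toFun (Polynomial.C c) = ‖c‖

/-- The topology of pointwise convergence on the Berkovich affine line. -/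
instance : TopologicalSpace (BerkA1 K) :=
  TopologicalSpace.induced BerkA1.toFun Pi.topologicalSpace

/-- The Berkovich projective line `P^1_Berk(K)`, the one-point compactification of the
Berkovich affine line. -/
abbrev BerkP1 := OnePoint (BerkA1 K)

/-- The evaluation seminorm `p ↦ ‖p(a)‖` attached to a classical point `a ∈ K`. -/
noncomputable def evalSeminorm (a : K) : BerkA1 K where
  toFun p := ‖p.eval a‖
  nonneg' p := norm_nonneg _
  map_mul' p q := by simp [norm_mul]
  add_le' p q := by simpa using norm_add_le (p.eval a) (q.eval a)
  restricts' c := by simp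

/-- The canonical embedding of the classical projective line `P^1(K) = K ∪ {∞}`
into the Berkovich projective line. -/
noncomputable def iota : OnePoint K → BerkP1 K :=
  OnePoint.map (evalSeminorm K)

noncomputable instance : MeasurableSpace (BerkP1 K) := borel _

instance : BorelSpace (BerkP1 K) := ⟨rfl⟩

/-- The support of a measure: points all of whose open neighborhoods have positive measure. -/
def msupport (μ : Measure (BerkP1 K)) : Set (BerkP1 K) :=
  {x | ∀ U : Set (BerkP1 K), IsOpen U → x ∈ U → 0 < μ U}

/-- Weak convergence of a sequence of measures on the Berkovich projective line:
integrals of every continuous real-valued function converge. -/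
def WeakTendsto (μs : ℕ → Measure (BerkP1 K)) (μ : Measure (BerkP1 K)) : Prop :=
  ∀ φ : C(BerkP1 K, ℝ),
    Tendsto (fun n => ∫ x, φ x ∂(μs n)) atTop (𝓝 (∫ x, φ x ∂μ))

/- ===================== auxiliary development ===================== -/

section BerkAux

private lemma pow_trick {a b : ℝ} (hb : 0 ≤ b)
    (h : ∀ n : ℕ, 0 < n → a ^ n ≤ (n + 1) * b ^ n) : a ≤ b := by
  rcases le_or_gt a b with h' | hab
  · exact h'
  exfalso
  rcases eq_or_lt_of_le hb with hb0 | hb0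
  · have h1 := h 1 one_pos
    rw [← hb0] at h1 hab
    simp at h1
    linarith
  · have hcn : ∀ n : ℕ, 0 < n → (a / b) ^ n ≤ n + 1 := by
      intro n hn
      have hbn : 0 < b ^ n := pow_pos hb0 n
      rw [div_pow, div_le_iff₀ hbn]
      exact h n hn
    have hc1 : 1 < a / b := (one_lt_div hb0).2 hab
    set ε := a / b - 1 with hε
    have hε0 : 0 < ε := by simp only [hε]; linarith
    obtain ⟨n, hn⟩ := exists_nat_gt (3 / ε ^ 2)
    have hn0 : 0 < n := by
      have h3 : (0 : ℝ) < 3 / ε ^ 2 := by positivity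
      exact_mod_cast lt_trans h3 hn
    have hnε : 3 < (n : ℝ) * ε ^ 2 := by
      rw [div_lt_iff₀ (by positivity)] at hn; linarith
    have hbern : 1 + (n : ℝ) * ε ≤ (a / b) ^ n := by
      have := one_add_mul_le_pow (by linarith : (-2 : ℝ) ≤ ε) n
      have hrw : (1 : ℝ) + ε = a / b := by simp only [hε]; ring
      rwa [hrw] at this
    have h2n := hcn (2 * n) (by positivity)
    have hc2 : (a / b) ^ (2 * n) = ((a / b) ^ n) ^ 2 := by
      rw [← pow_mul, mul_comm]
    rw [hc2] at h2n
    push_cast at h2n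
    have hnn : (1 : ℝ) ≤ n := by exact_mod_cast hn0
    have hs : (1 + (n : ℝ) * ε) ^ 2 ≤ ((a / b) ^ n) ^ 2 :=
      pow_le_pow_left₀ (by positivity) hbern 2
    have hq : 3 * (n : ℝ) ≤ (n : ℝ) * ((n : ℝ) * ε ^ 2) := by
      have := mul_le_mul_of_nonneg_left hnε.le (show (0:ℝ) ≤ (n:ℝ) by linarith)
      linarith
    have hfin : (1 + (n:ℝ)*ε)^2 ≤ 2*(n:ℝ)+1 := hs.trans h2n
    have hne : 0 < (n:ℝ)*ε := mul_pos (by linarith) hε0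
    nlinarith [hfin, hq, hne, hnn]

variable {K : Type*} [NontriviallyNormedField K] [IsAlgClosed K] [CompleteSpace K]
  [IsUltrametricDist K]

namespace BerkA1

lemma one_eq (x : BerkA1 K) : x.toFun 1 = 1 := by
  have := x.restricts' 1; simpa using this

lemma zero_eq (x : BerkA1 K) : x.toFun 0 = 0 := by
  have := x.restricts' 0; simpa using this

lemma pow_eq (x : BerkA1 K) (p : Polynomial K) (n : ℕ) :
    x.toFun (p ^ n) = x.toFun p ^ n := by
  induction n with
  | zero => simpa using one_eq x
  | succ n ih => rw [pow_succ, x.map_mul', ih, pow_succ]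

lemma neg_eq (x : BerkA1 K) (p : Polynomial K) : x.toFun (-p) = x.toFun p := by
  have h : (-p : Polynomial K) = Polynomial.C (-1 : K) * p := by
    simp
  rw [h, x.map_mul', x.restricts' (-1)]
  simp

lemma nonarch (x : BerkA1 K) (p q : Polynomial K) :
    x.toFun (p + q) ≤ max (x.toFun p) (x.toFun q) := by
  set M := max (x.toFun p) (x.toFun q) with hM
  have hM0 : 0 ≤ M := le_trans (x.nonneg' p) (le_max_left _ _)
  refine pow_trick hM0 (fun n hn => ?_)
  have tri : ∀ (s : Finset ℕ) (f : ℕ → Polynomial K),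
      x.toFun (∑ k ∈ s, f k) ≤ ∑ k ∈ s, x.toFun (f k) := by
    intro s f
    induction s using Finset.induction_on with
    | empty => simp [zero_eq]
    | @insert a s ha ih =>
      rw [Finset.sum_insert ha, Finset.sum_insert ha]
      exact le_trans (x.add_le' _ _) (by linarith)
  rw [← pow_eq, add_pow]
  calc x.toFun (∑ k ∈ Finset.range (n + 1), p ^ k * q ^ (n - k) * (n.choose k : Polynomial K))
      ≤ ∑ k ∈ Finset.range (n + 1), x.toFun (p ^ k * q ^ (n - k) * (n.choose k : Polynomial K)) :=
        tri _ _
    _ ≤ ∑ _k ∈ Finset.range (n + 1), M ^ n := by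
        refine Finset.sum_le_sum fun k hk => ?_
        have hcast : ((n.choose k : ℕ) : Polynomial K) = Polynomial.C ((n.choose k : ℕ) : K) := by
          simp
        rw [x.map_mul', x.map_mul', hcast, x.restricts', pow_eq, pow_eq]
        have h1 : x.toFun p ^ k ≤ M ^ k := pow_le_pow_left₀ (x.nonneg' p) (le_max_left _ _) k
        have h2 : x.toFun q ^ (n - k) ≤ M ^ (n - k) :=
          pow_le_pow_left₀ (x.nonneg' q) (le_max_right _ _) _
        have h3 : ‖((n.choose k : ℕ) : K)‖ ≤ 1 := IsUltrametricDist.norm_natCast_le_one K _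
        have hk' : k ≤ n := Nat.lt_succ_iff.mp (Finset.mem_range.mp hk)
        calc x.toFun p ^ k * x.toFun q ^ (n - k) * ‖((n.choose k : ℕ) : K)‖
            ≤ M ^ k * M ^ (n - k) * 1 := by
              refine mul_le_mul (mul_le_mul h1 h2 (pow_nonneg (x.nonneg' q) _)
                (pow_nonneg hM0 _)) h3 (norm_nonneg _)
                (mul_nonneg (pow_nonneg hM0 _) (pow_nonneg hM0 _))
          _ = M ^ n := by rw [mul_one, ← pow_add]; congr 1; omega
    _ = (n + 1) * M ^ n := by
        rw [Finset.sum_const, Finset.card_range, nsmul_eq_mul]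
        push_cast
        ring

lemma nonarch_sub (x : BerkA1 K) (p q : Polynomial K) :
    x.toFun (p - q) ≤ max (x.toFun p) (x.toFun q) := by
  rw [sub_eq_add_neg]
  simpa [neg_eq] using nonarch x p (-q)

lemma add_eq_left (x : BerkA1 K) {p q : Polynomial K} (h : x.toFun q < x.toFun p) :
    x.toFun (p + q) = x.toFun p := by
  refine le_antisymm (by simpa [max_eq_left h.le] using nonarch x p q) ?_
  have h2 : x.toFun p ≤ max (x.toFun (p + q)) (x.toFun q) := by
    have := nonarch x (p + q) (-q)
    simpa [neg_eq] using this
  rcases max_cases (x.toFun (p + q)) (x.toFun q) with ⟨he, _⟩ | ⟨he, _⟩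
  · rwa [he] at h2
  · rw [he] at h2; linarith

lemma sum_le (x : BerkA1 K) {ι : Type*} (s : Finset ι) (f : ι → Polynomial K) {B : ℝ}
    (hB : 0 ≤ B) (h : ∀ i ∈ s, x.toFun (f i) ≤ B) :
    x.toFun (∑ i ∈ s, f i) ≤ B := by
  classical
  induction s using Finset.induction_on with
  | empty => simpa [zero_eq] using hB
  | @insert a s ha ih =>
    rw [Finset.sum_insert ha]
    refine le_trans (nonarch x _ _) (max_le (h a (Finset.mem_insert_self a s)) ?_)
    exact ih fun i hi => h i (Finset.mem_insert_of_mem hi)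

lemma monomial_eq (x : BerkA1 K) (a : K) (i : ℕ) :
    x.toFun (Polynomial.C a * Polynomial.X ^ i) = ‖a‖ * x.toFun Polynomial.X ^ i := by
  rw [x.map_mul', x.restricts', pow_eq]

end BerkA1

end BerkAux

section BerkAux2

variable {K : Type*} [NontriviallyNormedField K] [IsAlgClosed K] [CompleteSpace K]
  [IsUltrametricDist K]

namespace BerkA1

/-- Sum of norms of coefficients of a polynomial. -/
noncomputable def Bp (p : Polynomial K) : ℝ :=
  ∑ i ∈ Finset.range (p.natDegree + 1), ‖p.coeff i‖

lemma Bp_nonneg (p : Polynomial K) : 0 ≤ Bp p :=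
  Finset.sum_nonneg fun _ _ => norm_nonneg _

lemma coeff_le_Bp (p : Polynomial K) (i : ℕ) : ‖p.coeff i‖ ≤ Bp p := by
  rcases le_or_gt i p.natDegree with h | h
  · exact Finset.single_le_sum (fun j _ => norm_nonneg (p.coeff j))
      (Finset.mem_range.2 (Nat.lt_succ_of_le h))
  · rw [Polynomial.coeff_eq_zero_of_natDegree_lt h]
    simpa using Bp_nonneg p

lemma xle (x : BerkA1 K) (p : Polynomial K) (d : ℕ) (hd : p.natDegree ≤ d) {m c : ℝ}
    (h1 : ‖p.coeff d‖ ≤ m) (hc : ∀ i, i < d → ‖p.coeff i‖ ≤ c)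
    (ht : 1 ≤ x.toFun Polynomial.X) (h2 : c ≤ m * x.toFun Polynomial.X) :
    x.toFun p ≤ m * x.toFun Polynomial.X ^ d := by
  have hm : 0 ≤ m := le_trans (norm_nonneg _) h1
  have ht0 : 0 < x.toFun Polynomial.X := lt_of_lt_of_le one_pos ht
  have hrep : p = ∑ i ∈ Finset.range (d + 1), Polynomial.C (p.coeff i) * Polynomial.X ^ i := by
    conv_lhs => rw [p.as_sum_range' (d + 1) (Nat.lt_succ_of_le hd)]
    simp [Polynomial.C_mul_X_pow_eq_monomial]
  rw [hrep]
  refine sum_le x _ _ (mul_nonneg hm (pow_nonneg ht0.le _)) (fun i hi => ?_)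
  rw [monomial_eq]
  have hi' : i ≤ d := Nat.lt_succ_iff.mp (Finset.mem_range.mp hi)
  rcases eq_or_lt_of_le hi' with h | h
  · subst h
    exact mul_le_mul_of_nonneg_right h1 (pow_nonneg ht0.le _)
  · calc ‖p.coeff i‖ * x.toFun Polynomial.X ^ i ≤ c * x.toFun Polynomial.X ^ i :=
        mul_le_mul_of_nonneg_right (hc i h) (pow_nonneg ht0.le _)
      _ ≤ (m * x.toFun Polynomial.X) * x.toFun Polynomial.X ^ i :=
        mul_le_mul_of_nonneg_right h2 (pow_nonneg ht0.le _)
      _ = m * x.toFun Polynomial.X ^ (i + 1) := by ring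
      _ ≤ m * x.toFun Polynomial.X ^ d :=
        mul_le_mul_of_nonneg_left (pow_le_pow_right₀ ht (by omega)) hm

lemma xle0 (x : BerkA1 K) (p : Polynomial K) :
    x.toFun p ≤ Bp p * max 1 (x.toFun Polynomial.X) ^ p.natDegree := by
  have h1 : (1:ℝ) ≤ max 1 (x.toFun Polynomial.X) := le_max_left _ _
  have hrep : p = ∑ i ∈ Finset.range (p.natDegree + 1),
      Polynomial.C (p.coeff i) * Polynomial.X ^ i := by
    conv_lhs => rw [p.as_sum_range' (p.natDegree + 1) (Nat.lt_succ_self _)]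
    simp [Polynomial.C_mul_X_pow_eq_monomial]
  conv_lhs => rw [hrep]
  refine sum_le x _ _ (mul_nonneg (Bp_nonneg p) (pow_nonneg (by positivity) _))
    (fun i hi => ?_)
  rw [monomial_eq]
  have hi' : i ≤ p.natDegree := Nat.lt_succ_iff.mp (Finset.mem_range.mp hi)
  calc ‖p.coeff i‖ * x.toFun Polynomial.X ^ i
      ≤ ‖p.coeff i‖ * max 1 (x.toFun Polynomial.X) ^ i := by
        refine mul_le_mul_of_nonneg_left (pow_le_pow_left₀ (x.nonneg' _) (le_max_right _ _) _)
          (norm_nonneg _)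
    _ ≤ Bp p * max 1 (x.toFun Polynomial.X) ^ p.natDegree := by
        refine mul_le_mul (coeff_le_Bp p i) (pow_le_pow_right₀ h1 hi')
          (pow_nonneg (by linarith) _) (Bp_nonneg p)

lemma xeq (x : BerkA1 K) (p : Polynomial K) (ht : 1 ≤ x.toFun Polynomial.X)
    (h : Bp p < ‖p.leadingCoeff‖ * x.toFun Polynomial.X) :
    x.toFun p = ‖p.leadingCoeff‖ * x.toFun Polynomial.X ^ p.natDegree := by
  have ht0 : 0 < x.toFun Polynomial.X := lt_of_lt_of_le one_pos ht
  rcases Nat.eq_zero_or_pos p.natDegree with hd | hd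
  · have hp : p = Polynomial.C (p.coeff 0) := p.eq_C_of_natDegree_eq_zero hd
    rw [hd, pow_zero, mul_one, Polynomial.leadingCoeff, hd]
    conv_lhs => rw [hp]
    exact x.restricts' _
  · set d := p.natDegree with hdd
    have hlead : x.toFun (Polynomial.C p.leadingCoeff * Polynomial.X ^ d)
        = ‖p.leadingCoeff‖ * x.toFun Polynomial.X ^ d := monomial_eq x _ _
    have herase : x.toFun p.eraseLead < ‖p.leadingCoeff‖ * x.toFun Polynomial.X ^ d := by
      have h1 : x.toFun p.eraseLead ≤ Bp p * x.toFun Polynomial.X ^ (d - 1) := by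
        refine xle x _ (d - 1) (m := Bp p) (c := Bp p) ?_ ?_ (fun i _ => ?_) ht ?_
        · exact le_trans p.eraseLead_natDegree_le (by omega)
        · rw [Polynomial.eraseLead_coeff_of_ne (d - 1) (by omega)]
          exact coeff_le_Bp p _
        · rw [Polynomial.eraseLead_coeff_of_ne i (by omega)]
          exact coeff_le_Bp p _
        · calc Bp p ≤ Bp p * 1 := by rw [mul_one]
            _ ≤ Bp p * x.toFun Polynomial.X := by
              exact mul_le_mul_of_nonneg_left ht (Bp_nonneg p)
      calc x.toFun p.eraseLead ≤ Bp p * x.toFun Polynomial.X ^ (d - 1) := h1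
        _ < (‖p.leadingCoeff‖ * x.toFun Polynomial.X) * x.toFun Polynomial.X ^ (d - 1) := by
            exact mul_lt_mul_of_pos_right h (pow_pos ht0 _)
        _ = ‖p.leadingCoeff‖ * x.toFun Polynomial.X ^ (d - 1 + 1) := by ring
        _ = ‖p.leadingCoeff‖ * x.toFun Polynomial.X ^ d := by congr 2; omega
    have hsum := add_eq_left x (p := Polynomial.C p.leadingCoeff * Polynomial.X ^ d)
      (q := p.eraseLead) (by rw [hlead]; exact herase)
    rw [← hlead]
    rw [← hsum]
    congr 1
    rw [add_comm]
    exact (p.eraseLead_add_C_mul_X_pow).symm ▸ rfl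

end BerkA1

end BerkAux2
section BerkAux3

variable {K : Type*} [NontriviallyNormedField K] [IsAlgClosed K] [CompleteSpace K]
  [IsUltrametricDist K]

namespace BerkA1

lemma maxd_aux (p q : Polynomial K) (D : ℕ) (hpD : p.natDegree ≤ D) (hqD : q.natDegree ≤ D)
    {m : ℝ} (h1 : ‖p.coeff D‖ ≤ m) (h2 : ‖q.coeff D‖ = m)
    (x : BerkA1 K) (ht : 1 ≤ x.toFun Polynomial.X)
    (hp : Bp p ≤ m * x.toFun Polynomial.X) (hq : Bp q < m * x.toFun Polynomial.X) :
    max (x.toFun p) (x.toFun q) = m * x.toFun Polynomial.X ^ D := by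
  have ht0 : 0 < x.toFun Polynomial.X := lt_of_lt_of_le one_pos ht
  have hm0 : 0 < m := by
    by_contra hc
    push_neg at hc
    have : m * x.toFun Polynomial.X ≤ 0 := mul_nonpos_of_nonpos_of_nonneg hc ht0.le
    have := lt_of_le_of_lt (Bp_nonneg q) hq
    linarith
  have hqc : q.coeff D ≠ 0 := by
    intro h0
    rw [h0] at h2
    simp at h2
    exact hm0.ne (by rw [h2])
  have hqd : q.natDegree = D := le_antisymm hqD (Polynomial.le_natDegree_of_ne_zero hqc)
  have hxq : x.toFun q = m * x.toFun Polynomial.X ^ D := by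
    have hlc : q.leadingCoeff = q.coeff D := by rw [Polynomial.leadingCoeff, hqd]
    have := xeq x q ht (by rw [hlc, h2]; exact hq)
    rw [this, hlc, h2, hqd]
  have hxp : x.toFun p ≤ m * x.toFun Polynomial.X ^ D :=
    xle x p D hpD h1 (fun i _ => coeff_le_Bp p i) ht hp
  rw [← hxq] at hxp ⊢
  exact max_eq_right hxp

lemma maxd (p q : Polynomial K) (x : BerkA1 K) (ht : 1 ≤ x.toFun Polynomial.X)
    {D : ℕ} (hD : D = max p.natDegree q.natDegree) {m : ℝ}
    (hm : m = max ‖p.coeff D‖ ‖q.coeff D‖)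
    (hBig : Bp p + Bp q < m * x.toFun Polynomial.X) :
    max (x.toFun p) (x.toFun q) = m * x.toFun Polynomial.X ^ D := by
  have hpD : p.natDegree ≤ D := hD ▸ le_max_left _ _
  have hqD : q.natDegree ≤ D := hD ▸ le_max_right _ _
  have hBp : Bp p ≤ m * x.toFun Polynomial.X := by
    have := Bp_nonneg q; linarith
  have hBq : Bp q < m * x.toFun Polynomial.X := by
    have := Bp_nonneg p; linarith
  rcases le_total ‖p.coeff D‖ ‖q.coeff D‖ with h | h
  · exact maxd_aux p q D hpD hqD (hm ▸ le_max_left _ _) (by rw [hm, max_eq_right h]) x ht hBp hBq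
  · rw [max_comm (x.toFun p) (x.toFun q)]
    refine maxd_aux q p D hqD hpD (hm ▸ le_max_right _ _) (by rw [hm, max_eq_left h]) x ht ?_ ?_
    · have := Bp_nonneg p; linarith
    · have := Bp_nonneg q; linarith

/-- positivity of the "leading pair" norm for a pair (num, denom) with denom ≠ 0 -/
lemma mtop_pos (p q : Polynomial K) (hq : q ≠ 0) {D : ℕ} (hD : D = max p.natDegree q.natDegree) :
    0 < max ‖p.coeff D‖ ‖q.coeff D‖ := by
  rcases le_or_gt p.natDegree q.natDegree with h | h
  · have hqd : q.natDegree = D := by omega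
    have hne : q.coeff D ≠ 0 := by
      rw [← hqd]
      exact Polynomial.leadingCoeff_ne_zero.mpr hq
    exact lt_of_lt_of_le (norm_pos_iff.2 hne) (le_max_right _ _)
  · have hpd : p.natDegree = D := by omega
    have hp : p ≠ 0 := by
      intro h0
      rw [h0] at h
      simp at h
    have hne : p.coeff D ≠ 0 := by
      rw [← hpd]
      exact Polynomial.leadingCoeff_ne_zero.mpr hp
    exact lt_of_lt_of_le (norm_pos_iff.2 hne) (le_max_left _ _)

/-- the denominator of `Phi` is positive at every point, by coprimality -/
lemma posden (x : BerkA1 K) {p q : Polynomial K} (h : IsCoprime p q) :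
    0 < max (x.toFun p) (x.toFun q) := by
  rcases lt_or_eq_of_le (le_max_iff.2 (Or.inl (x.nonneg' p))) with h' | h'
  · exact h'
  exfalso
  have hp0 : x.toFun p = 0 := le_antisymm (h' ▸ le_max_left _ _) (x.nonneg' p)
  have hq0 : x.toFun q = 0 := le_antisymm (h' ▸ le_max_right _ _) (x.nonneg' q)
  obtain ⟨u, v, huv⟩ := h
  have h1 : x.toFun 1 = 1 := one_eq x
  have : x.toFun (u * p + v * q) ≤ x.toFun (u * p) + x.toFun (v * q) := x.add_le' _ _
  rw [huv, h1, x.map_mul', x.map_mul', hp0, hq0] at this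
  simp at this
  linarith

end BerkA1

end BerkAux3
section BerkAux4

variable {K : Type*} [NontriviallyNormedField K] [IsAlgClosed K] [CompleteSpace K]
  [IsUltrametricDist K]

namespace BerkPhi

/-- chordal metric on pairs of homogeneous coordinates -/
noncomputable def cp (u v : K × K) : ℝ :=
  ‖u.1 * v.2 - u.2 * v.1‖ / (max ‖u.1‖ ‖u.2‖ * max ‖v.1‖ ‖v.2‖)

lemma chordal_eq_cp (x y : OnePoint K) :
    chordal K x y = cp (homCoord K x) (homCoord K y) := rfl

lemma cp_comm (u v : K × K) : cp u v = cp v u := by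
  unfold cp
  rw [mul_comm (max ‖u.1‖ ‖u.2‖) _]
  congr 1
  rw [← norm_neg (v.1 * u.2 - v.2 * u.1)]
  congr 1
  ring

lemma cp_smul_left {l : K} (hl : l ≠ 0) (u v : K × K) :
    cp (l * u.1, l * u.2) v = cp u v := by
  unfold cp
  have h1 : (l * u.1, l * u.2).1 * v.2 - (l * u.1, l * u.2).2 * v.1
      = l * (u.1 * v.2 - u.2 * v.1) := by simp; ring
  rw [h1, norm_mul]
  have h2 : max ‖(l * u.1, l * u.2).1‖ ‖(l * u.1, l * u.2).2‖ = ‖l‖ * max ‖u.1‖ ‖u.2‖ := by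
    simp only [norm_mul]
    rcases le_total ‖u.1‖ ‖u.2‖ with h | h
    · rw [max_eq_right h, max_eq_right (mul_le_mul_of_nonneg_left h (norm_nonneg l))]
    · rw [max_eq_left h, max_eq_left (mul_le_mul_of_nonneg_left h (norm_nonneg l))]
  rw [h2, mul_assoc]
  exact mul_div_mul_left _ _ (norm_ne_zero_iff.2 hl)

lemma cp_smul_right {l : K} (hl : l ≠ 0) (u v : K × K) :
    cp u (l * v.1, l * v.2) = cp u v := by
  rw [cp_comm, cp_smul_left hl, cp_comm]

lemma evalP1_coe (h : RatFunc K) (a : K) :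
    evalP1 K h (a : OnePoint K) = if h.denom.eval a = 0 then OnePoint.infty
      else ((h.num.eval a / h.denom.eval a : K) : OnePoint K) := rfl

lemma evalP1_infty (h : RatFunc K) :
    evalP1 K h OnePoint.infty = if h.denom.natDegree < h.num.natDegree then OnePoint.infty
      else ((h.num.coeff h.denom.natDegree / h.denom.leadingCoeff : K) : OnePoint K) := rfl

lemma homCoord_coe (a : K) : homCoord K (a : OnePoint K) = (a, 1) := rfl

lemma homCoord_infty : homCoord K OnePoint.infty = (1, 0) := rfl

lemma num_eval_ne_zero (h : RatFunc K) {a : K} (hd : h.denom.eval a = 0) :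
    h.num.eval a ≠ 0 := by
  obtain ⟨u, v, huv⟩ := RatFunc.isCoprime_num_denom h
  intro h0
  have := congrArg (Polynomial.eval a) huv
  simp [h0, hd] at this

lemma homCoord_evalP1_coe (h : RatFunc K) (a : K) :
    ∃ l : K, l ≠ 0 ∧ homCoord K (evalP1 K h (a : OnePoint K)) =
      (l * h.num.eval a, l * h.denom.eval a) := by
  by_cases hd : h.denom.eval a = 0
  · have hnum := num_eval_ne_zero h hd
    refine ⟨(h.num.eval a)⁻¹, inv_ne_zero hnum, ?_⟩
    rw [evalP1_coe, if_pos hd, homCoord_infty, hd]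
    ext <;> simp [inv_mul_cancel₀ hnum]
  · refine ⟨(h.denom.eval a)⁻¹, inv_ne_zero hd, ?_⟩
    rw [evalP1_coe, if_neg hd, homCoord_coe]
    ext <;> simp [inv_mul_cancel₀ hd, div_eq_inv_mul]

lemma homCoord_evalP1_infty (h : RatFunc K) :
    ∃ l : K, l ≠ 0 ∧ homCoord K (evalP1 K h OnePoint.infty) =
      (l * h.num.coeff (rdeg K h), l * h.denom.coeff (rdeg K h)) := by
  by_cases hc : h.denom.natDegree < h.num.natDegree
  · have hnum : h.num ≠ 0 := by
      intro h0
      rw [h0] at hc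
      simp at hc
    have hr : rdeg K h = h.num.natDegree := max_eq_left hc.le
    refine ⟨(h.num.leadingCoeff)⁻¹, inv_ne_zero (Polynomial.leadingCoeff_ne_zero.2 hnum), ?_⟩
    rw [evalP1_infty, if_pos hc, homCoord_infty, hr]
    have hd0 : h.denom.coeff h.num.natDegree = 0 :=
      Polynomial.coeff_eq_zero_of_natDegree_lt hc
    ext
    · simp [Polynomial.coeff_natDegree,
        inv_mul_cancel₀ (Polynomial.leadingCoeff_ne_zero.2 hnum)]
    · simp [hd0]
  · push_neg at hc
    have hr : rdeg K h = h.denom.natDegree := max_eq_right hc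
    have hlc : h.denom.leadingCoeff ≠ 0 :=
      Polynomial.leadingCoeff_ne_zero.2 (RatFunc.denom_ne_zero h)
    refine ⟨(h.denom.leadingCoeff)⁻¹, inv_ne_zero hlc, ?_⟩
    rw [evalP1_infty, if_neg (not_lt.2 hc), homCoord_coe, hr]
    ext
    · simp [div_eq_inv_mul]
    · simp [Polynomial.coeff_natDegree, inv_mul_cancel₀ hlc]

lemma chordal_eval_coe (f g : RatFunc K) (a : K) :
    chordal K (evalP1 K f (a : OnePoint K)) (evalP1 K g (a : OnePoint K)) =
      cp (f.num.eval a, f.denom.eval a) (g.num.eval a, g.denom.eval a) := by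
  obtain ⟨l1, hl1, h1⟩ := homCoord_evalP1_coe f a
  obtain ⟨l2, hl2, h2⟩ := homCoord_evalP1_coe g a
  rw [chordal_eq_cp, h1, h2]
  rw [cp_smul_left (u := (f.num.eval a, f.denom.eval a)) hl1,
    cp_smul_right (v := (g.num.eval a, g.denom.eval a)) hl2]

lemma chordal_eval_infty (f g : RatFunc K) :
    chordal K (evalP1 K f OnePoint.infty) (evalP1 K g OnePoint.infty) =
      cp (f.num.coeff (rdeg K f), f.denom.coeff (rdeg K f))
        (g.num.coeff (rdeg K g), g.denom.coeff (rdeg K g)) := by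
  obtain ⟨l1, hl1, h1⟩ := homCoord_evalP1_infty f
  obtain ⟨l2, hl2, h2⟩ := homCoord_evalP1_infty g
  rw [chordal_eq_cp, h1, h2]
  rw [cp_smul_left (u := (f.num.coeff (rdeg K f), f.denom.coeff (rdeg K f))) hl1,
    cp_smul_right (v := (g.num.coeff (rdeg K g), g.denom.coeff (rdeg K g))) hl2]

lemma coeff_top_mul (p q : Polynomial K) (dp dq : ℕ) (hp : p.natDegree ≤ dp)
    (hq : q.natDegree ≤ dq) : (p * q).coeff (dp + dq) = p.coeff dp * q.coeff dq := by
  rcases eq_or_lt_of_le hp with h | h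
  · rcases eq_or_lt_of_le hq with h' | h'
    · rw [← h, ← h']
      exact Polynomial.coeff_mul_degree_add_degree p q
    · rw [Polynomial.coeff_eq_zero_of_natDegree_lt h', mul_zero]
      refine Polynomial.coeff_eq_zero_of_natDegree_lt ?_
      calc (p * q).natDegree ≤ p.natDegree + q.natDegree := Polynomial.natDegree_mul_le
        _ < dp + dq := by omega
  · rw [Polynomial.coeff_eq_zero_of_natDegree_lt h, zero_mul]
    refine Polynomial.coeff_eq_zero_of_natDegree_lt ?_
    calc (p * q).natDegree ≤ p.natDegree + q.natDegree := Polynomial.natDegree_mul_le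
      _ < dp + dq := by omega

/-- The numerator polynomial of the chordal pair function. -/
noncomputable def NP (f g : RatFunc K) : Polynomial K :=
  f.num * g.denom - f.denom * g.num

lemma NP_natDegree_le (f g : RatFunc K) :
    (NP f g).natDegree ≤ rdeg K f + rdeg K g := by
  refine le_trans (Polynomial.natDegree_sub_le _ _) (max_le ?_ ?_)
  · refine le_trans Polynomial.natDegree_mul_le ?_
    exact add_le_add (le_max_left _ _) (le_max_right _ _)
  · refine le_trans Polynomial.natDegree_mul_le ?_
    exact add_le_add (le_max_right _ _) (le_max_left _ _)

lemma NP_coeff_top (f g : RatFunc K) :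
    (NP f g).coeff (rdeg K f + rdeg K g) =
      f.num.coeff (rdeg K f) * g.denom.coeff (rdeg K g) -
        f.denom.coeff (rdeg K f) * g.num.coeff (rdeg K g) := by
  unfold NP
  rw [Polynomial.coeff_sub]
  rw [coeff_top_mul f.num g.denom (rdeg K f) (rdeg K g) (le_max_left _ _) (le_max_right _ _),
    coeff_top_mul f.denom g.num (rdeg K f) (rdeg K g) (le_max_right _ _) (le_max_left _ _)]

/-- The candidate continuous extension. -/
noncomputable def Phi (f g : RatFunc K) : BerkP1 K → ℝ :=
  OnePoint.rec
    (‖(NP f g).coeff (rdeg K f + rdeg K g)‖ /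
      (max ‖f.num.coeff (rdeg K f)‖ ‖f.denom.coeff (rdeg K f)‖ *
        max ‖g.num.coeff (rdeg K g)‖ ‖g.denom.coeff (rdeg K g)‖))
    (fun x => x.toFun (NP f g) /
      (max (x.toFun f.num) (x.toFun f.denom) * max (x.toFun g.num) (x.toFun g.denom)))

lemma Phi_coe (f g : RatFunc K) (x : BerkA1 K) :
    Phi f g (x : BerkP1 K) = x.toFun (NP f g) /
      (max (x.toFun f.num) (x.toFun f.denom) * max (x.toFun g.num) (x.toFun g.denom)) := rfl

lemma Phi_infty (f g : RatFunc K) :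
    Phi f g OnePoint.infty = ‖(NP f g).coeff (rdeg K f + rdeg K g)‖ /
      (max ‖f.num.coeff (rdeg K f)‖ ‖f.denom.coeff (rdeg K f)‖ *
        max ‖g.num.coeff (rdeg K g)‖ ‖g.denom.coeff (rdeg K g)‖) := rfl

lemma iota_coe (a : K) : iota K (a : OnePoint K) = ((evalSeminorm K a : BerkA1 K) : BerkP1 K) :=
  rfl

lemma iota_infty : iota K OnePoint.infty = OnePoint.infty := rfl

lemma evalSeminorm_toFun (a : K) (p : Polynomial K) :
    (evalSeminorm K a).toFun p = ‖p.eval a‖ := rfl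

lemma Phi_iota (f g : RatFunc K) (w : OnePoint K) :
    Phi f g (iota K w) = chordal K (evalP1 K f w) (evalP1 K g w) := by
  induction w using OnePoint.rec with
  | infty =>
    rw [iota_infty, Phi_infty, chordal_eval_infty, cp, NP_coeff_top]
  | coe a =>
    rw [iota_coe, Phi_coe, chordal_eval_coe, cp]
    simp only [evalSeminorm_toFun]
    congr 1
    unfold NP
    simp [Polynomial.eval_sub, Polynomial.eval_mul]

end BerkPhi

end BerkAux4
section BerkAux5

variable {K : Type*} [NontriviallyNormedField K] [IsAlgClosed K] [CompleteSpace K]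
  [IsUltrametricDist K]

namespace BerkPhi

open BerkA1

lemma norm_sub_le_max' (a b : K) : ‖a - b‖ ≤ max ‖a‖ ‖b‖ := by
  rw [sub_eq_add_neg]
  simpa using IsUltrametricDist.norm_add_le_max a (-b)

lemma continuous_eval (p : Polynomial K) : Continuous (fun x : BerkA1 K => x.toFun p) :=
  (continuous_apply p).comp continuous_induced_dom

lemma isInducing_toFun :
    Topology.IsInducing (BerkA1.toFun : BerkA1 K → (Polynomial K → ℝ)) := ⟨rfl⟩

lemma isCompact_le (R : ℝ) : IsCompact {x : BerkA1 K | x.toFun Polynomial.X ≤ R} := by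
  rw [(isInducing_toFun (K := K)).isCompact_iff]
  set S : Set (Polynomial K → ℝ) := {φ | (∀ p, 0 ≤ φ p) ∧ (∀ p q, φ (p * q) = φ p * φ q) ∧
    (∀ p q, φ (p + q) ≤ φ p + φ q) ∧ (∀ c : K, φ (Polynomial.C c) = ‖c‖) ∧
    φ Polynomial.X ≤ R} with hS
  have himg : BerkA1.toFun '' {x : BerkA1 K | x.toFun Polynomial.X ≤ R} = S := by
    ext φ
    constructor
    · rintro ⟨x, hx, rfl⟩
      exact ⟨x.nonneg', x.map_mul', x.add_le', x.restricts', hx⟩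
    · rintro ⟨h1, h2, h3, h4, h5⟩
      exact ⟨⟨φ, h1, h2, h3, h4⟩, h5, rfl⟩
  rw [himg]
  have hclosed : IsClosed S := by
    have hrw : S = (⋂ p : Polynomial K, {φ : Polynomial K → ℝ | 0 ≤ φ p}) ∩
        ((⋂ p : Polynomial K, ⋂ q : Polynomial K,
            {φ : Polynomial K → ℝ | φ (p * q) = φ p * φ q}) ∩
          ((⋂ p : Polynomial K, ⋂ q : Polynomial K,
              {φ : Polynomial K → ℝ | φ (p + q) ≤ φ p + φ q}) ∩
            ((⋂ c : K, {φ : Polynomial K → ℝ | φ (Polynomial.C c) = ‖c‖}) ∩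
              {φ : Polynomial K → ℝ | φ Polynomial.X ≤ R}))) := by
      ext φ
      simp only [hS, Set.mem_setOf_eq, Set.mem_inter_iff, Set.mem_iInter]
      try tauto
    rw [hrw]
    refine IsClosed.inter (isClosed_iInter fun p =>
        isClosed_le continuous_const (continuous_apply p)) ?_
    refine IsClosed.inter (isClosed_iInter fun p => isClosed_iInter fun q =>
        isClosed_eq (continuous_apply (p * q)) ((continuous_apply p).mul (continuous_apply q))) ?_
    refine IsClosed.inter (isClosed_iInter fun p => isClosed_iInter fun q =>
        isClosed_le (continuous_apply (p + q)) ((continuous_apply p).add (continuous_apply q))) ?_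
    refine IsClosed.inter (isClosed_iInter fun c =>
        isClosed_eq (continuous_apply (Polynomial.C c)) continuous_const) ?_
    exact isClosed_le (continuous_apply Polynomial.X) continuous_const
  have hsub : S ⊆ Set.pi Set.univ
      (fun p : Polynomial K => Set.Icc 0 (Bp p * max 1 R ^ p.natDegree)) := by
    rintro φ ⟨h1, h2, h3, h4, h5⟩ p _
    refine ⟨h1 p, ?_⟩
    have hx := xle0 (⟨φ, h1, h2, h3, h4⟩ : BerkA1 K) p
    refine le_trans hx ?_
    refine mul_le_mul_of_nonneg_left ?_ (Bp_nonneg p)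
    refine pow_le_pow_left₀ (le_trans zero_le_one (le_max_left _ _)) ?_ _
    exact max_le_max le_rfl h5
  exact IsCompact.of_isClosed_subset (isCompact_univ_pi fun p => isCompact_Icc) hclosed hsub

lemma Phi_mem_Icc (f g : RatFunc K) (S : BerkP1 K) : Phi f g S ∈ Set.Icc (0 : ℝ) 1 := by
  induction S using OnePoint.rec with
  | infty =>
    rw [Phi_infty]
    constructor
    · positivity
    · refine div_le_one_of_le₀ ?_ (by positivity)
      rw [NP_coeff_top]
      refine le_trans (norm_sub_le_max' _ _) (max_le ?_ ?_)
      · rw [norm_mul]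
        exact mul_le_mul (le_max_left _ _) (le_max_right _ _) (norm_nonneg _)
          (le_trans (norm_nonneg _) (le_max_left _ _))
      · rw [norm_mul]
        exact mul_le_mul (le_max_right _ _) (le_max_left _ _) (norm_nonneg _)
          (le_trans (norm_nonneg _) (le_max_left _ _))
  | coe x =>
    rw [Phi_coe]
    have hnn : ∀ p : Polynomial K, 0 ≤ x.toFun p := x.nonneg'
    have hden : 0 ≤ max (x.toFun f.num) (x.toFun f.denom) *
        max (x.toFun g.num) (x.toFun g.denom) :=
      mul_nonneg (le_trans (hnn _) (le_max_left _ _)) (le_trans (hnn _) (le_max_left _ _))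
    constructor
    · exact div_nonneg (hnn _) hden
    · refine div_le_one_of_le₀ ?_ hden
      refine le_trans (nonarch_sub x _ _) (max_le ?_ ?_)
      · rw [x.map_mul']
        exact mul_le_mul (le_max_left _ _) (le_max_right _ _) (hnn _)
          (le_trans (hnn _) (le_max_left _ _))
      · rw [x.map_mul']
        exact mul_le_mul (le_max_right _ _) (le_max_left _ _) (hnn _)
          (le_trans (hnn _) (le_max_left _ _))

lemma NP_minus_top_natDegree_le (f g : RatFunc K) :
    (NP f g - Polynomial.C ((NP f g).coeff (rdeg K f + rdeg K g)) *
      Polynomial.X ^ (rdeg K f + rdeg K g)).natDegree ≤ rdeg K f + rdeg K g - 1 := by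
  set D := rdeg K f + rdeg K g with hD
  rw [Polynomial.natDegree_le_iff_coeff_eq_zero]
  intro N hN
  have hDN : D ≤ N := by omega
  rcases eq_or_lt_of_le hDN with h | h
  · subst h
    simp [Polynomial.coeff_X_pow]
  · have h0 : (NP f g).coeff N = 0 :=
      Polynomial.coeff_eq_zero_of_natDegree_lt (lt_of_le_of_lt (NP_natDegree_le f g) h)
    simp [Polynomial.coeff_X_pow, h0, Ne.symm (Nat.ne_of_lt h)]

lemma Phi_tendsto (f g : RatFunc K) (hf : 0 < rdeg K f) {ε : ℝ} (hε : 0 < ε) :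
    ∃ R : ℝ, ∀ x : BerkA1 K, R < x.toFun Polynomial.X →
      |Phi f g (x : BerkP1 K) - Phi f g OnePoint.infty| < ε := by
  set d1 := rdeg K f with hd1
  set d2 := rdeg K g with hd2
  set D := d1 + d2 with hDdef
  set m1 := max ‖f.num.coeff d1‖ ‖f.denom.coeff d1‖ with hm1def
  set m2 := max ‖g.num.coeff d2‖ ‖g.denom.coeff d2‖ with hm2def
  set n := (NP f g).coeff D with hndef
  set M := NP f g - Polynomial.C n * Polynomial.X ^ D with hMdef
  have hm1 : 0 < m1 := mtop_pos f.num f.denom (RatFunc.denom_ne_zero f) rfl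
  have hm2 : 0 < m2 := mtop_pos g.num g.denom (RatFunc.denom_ne_zero g) rfl
  have hD1 : 1 ≤ D := by omega
  refine ⟨1 + (Bp f.num + Bp f.denom) / m1 + (Bp g.num + Bp g.denom) / m2
    + Bp M / (ε * m1 * m2), fun x hx => ?_⟩
  set t := x.toFun Polynomial.X with htdef
  have hb1 : 0 ≤ (Bp f.num + Bp f.denom) / m1 :=
    div_nonneg (by have := Bp_nonneg f.num; have := Bp_nonneg f.denom; linarith) hm1.le
  have hb2 : 0 ≤ (Bp g.num + Bp g.denom) / m2 :=
    div_nonneg (by have := Bp_nonneg g.num; have := Bp_nonneg g.denom; linarith) hm2.le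
  have hb3 : 0 ≤ Bp M / (ε * m1 * m2) := div_nonneg (Bp_nonneg M) (by positivity)
  have ht1 : 1 ≤ t := by linarith
  have ht0 : 0 < t := lt_of_lt_of_le one_pos ht1
  have hf1 : Bp f.num + Bp f.denom < m1 * t := by
    have h' : (Bp f.num + Bp f.denom) / m1 < t := by linarith
    calc Bp f.num + Bp f.denom = (Bp f.num + Bp f.denom) / m1 * m1 := by
          field_simp
      _ < t * m1 := mul_lt_mul_of_pos_right h' hm1
      _ = m1 * t := mul_comm _ _
  have hg1 : Bp g.num + Bp g.denom < m2 * t := by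
    have h' : (Bp g.num + Bp g.denom) / m2 < t := by linarith
    calc Bp g.num + Bp g.denom = (Bp g.num + Bp g.denom) / m2 * m2 := by
          field_simp
      _ < t * m2 := mul_lt_mul_of_pos_right h' hm2
      _ = m2 * t := mul_comm _ _
  have hM1 : Bp M < ε * m1 * m2 * t := by
    have hpos : (0:ℝ) < ε * m1 * m2 := by positivity
    have h' : Bp M / (ε * m1 * m2) < t := by linarith
    calc Bp M = Bp M / (ε * m1 * m2) * (ε * m1 * m2) := by field_simp
      _ < t * (ε * m1 * m2) := mul_lt_mul_of_pos_right h' hpos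
      _ = ε * m1 * m2 * t := mul_comm _ _
  have hmax1 : max (x.toFun f.num) (x.toFun f.denom) = m1 * t ^ d1 :=
    maxd f.num f.denom x ht1 (by rw [hd1]; rfl) hm1def hf1
  have hmax2 : max (x.toFun g.num) (x.toFun g.denom) = m2 * t ^ d2 :=
    maxd g.num g.denom x ht1 (by rw [hd2]; rfl) hm2def hg1
  have hMdeg : M.natDegree ≤ D - 1 := NP_minus_top_natDegree_le f g
  have hxM : x.toFun M ≤ Bp M * t ^ (D - 1) :=
    xle x M (D - 1) hMdeg (coeff_le_Bp M _) (fun i _ => coeff_le_Bp M i) ht1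
      (le_mul_of_one_le_right (Bp_nonneg M) ht1)
  have hmono : x.toFun (Polynomial.C n * Polynomial.X ^ D) = ‖n‖ * t ^ D := monomial_eq x n D
  have hNP1 : NP f g = M + Polynomial.C n * Polynomial.X ^ D := by rw [hMdef]; ring
  have hub : x.toFun (NP f g) - ‖n‖ * t ^ D ≤ x.toFun M := by
    have h1 := nonarch x M (Polynomial.C n * Polynomial.X ^ D)
    rw [← hNP1, hmono] at h1
    have h2 := le_trans h1 (max_le_add_of_nonneg (x.nonneg' M) (by positivity))
    linarith
  have hlb : ‖n‖ * t ^ D - x.toFun (NP f g) ≤ x.toFun M := by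
    have h2 : Polynomial.C n * Polynomial.X ^ D = NP f g - M := by rw [hMdef]; ring
    have h1 := nonarch_sub x (NP f g) M
    rw [← h2, hmono] at h1
    have h3 := le_trans h1 (max_le_add_of_nonneg (x.nonneg' _) (x.nonneg' M))
    linarith
  have hnum_close : |x.toFun (NP f g) - ‖n‖ * t ^ D| ≤ Bp M * t ^ (D - 1) :=
    abs_sub_le_iff.2 ⟨le_trans hub hxM, le_trans hlb hxM⟩
  have htD : (0:ℝ) < t ^ D := pow_pos ht0 D
  have hA0 : 0 < m1 * m2 := mul_pos hm1 hm2
  have hden : max (x.toFun f.num) (x.toFun f.denom) * max (x.toFun g.num) (x.toFun g.denom)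
      = (m1 * m2) * t ^ D := by
    rw [hmax1, hmax2, hDdef, pow_add]; ring
  have hPhiC : Phi f g (x : BerkP1 K) = x.toFun (NP f g) / ((m1 * m2) * t ^ D) := by
    rw [Phi_coe, hden]
  have hPhiI : Phi f g OnePoint.infty = ‖n‖ * t ^ D / ((m1 * m2) * t ^ D) := by
    rw [Phi_infty, ← hd1, ← hd2, ← hDdef, ← hndef, ← hm1def, ← hm2def]
    rw [mul_div_mul_right _ _ (ne_of_gt htD)]
  rw [hPhiC, hPhiI, div_sub_div_same, abs_div, abs_of_pos (mul_pos hA0 htD)]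
  rw [div_lt_iff₀ (mul_pos hA0 htD)]
  refine lt_of_le_of_lt hnum_close ?_
  have hsplit : t ^ D = t * t ^ (D - 1) := by
    rw [← pow_succ']
    congr 1
    omega
  rw [hsplit]
  calc Bp M * t ^ (D - 1) < (ε * m1 * m2 * t) * t ^ (D - 1) :=
        mul_lt_mul_of_pos_right hM1 (pow_pos ht0 _)
    _ = ε * (m1 * m2 * (t * t ^ (D - 1))) := by ring

end BerkPhi

end BerkAux5
section BerkAux6

variable {K : Type*} [NontriviallyNormedField K] [IsAlgClosed K] [CompleteSpace K]
  [IsUltrametricDist K]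

namespace BerkPhi

open BerkA1

lemma Phi_continuous (f g : RatFunc K) (hf : 0 < rdeg K f) : Continuous (Phi f g) := by
  rw [continuous_iff_continuousAt]
  intro S
  induction S using OnePoint.rec with
  | coe x =>
    refine OnePoint.continuousAt_coe.2 ?_
    have hc : Continuous (fun y : BerkA1 K => Phi f g (y : BerkP1 K)) := by
      simp only [Phi_coe]
      refine Continuous.div (continuous_eval _)
        (((continuous_eval f.num).max (continuous_eval f.denom)).mul
          ((continuous_eval g.num).max (continuous_eval g.denom))) (fun y => ?_)
      exact ne_of_gt (mul_pos (posden y (RatFunc.isCoprime_num_denom f))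
        (posden y (RatFunc.isCoprime_num_denom g)))
    exact hc.continuousAt
  | infty =>
    refine OnePoint.continuousAt_infty.2 (fun s hs => ?_)
    obtain ⟨δ, hδ, hball⟩ := Metric.mem_nhds_iff.1 hs
    obtain ⟨R, hR⟩ := Phi_tendsto f g hf hδ
    refine ⟨{y : BerkA1 K | y.toFun Polynomial.X ≤ R},
      isClosed_le (continuous_eval _) continuous_const, isCompact_le R, fun y hy => ?_⟩
    have hlt : R < y.toFun Polynomial.X := not_le.1 hy
    refine hball ?_
    rw [Metric.mem_ball, Real.dist_eq]
    exact hR y hlt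

end BerkPhi

end BerkAux6

section BerkAux7

variable {K : Type*} [NontriviallyNormedField K] [IsAlgClosed K] [CompleteSpace K]
  [IsUltrametricDist K]

namespace BerkDense

lemma norm_dense (K : Type*) [NontriviallyNormedField K] [IsAlgClosed K]
    (a b : ℝ) (ha : 0 ≤ a) (hab : a < b) : ∃ t : K, a < ‖t‖ ∧ ‖t‖ < b := by
  have hb0 : 0 < b := lt_of_le_of_lt ha hab
  set a' := max a (b / 2) with ha'def
  have ha'0 : 0 < a' := lt_of_lt_of_le (by linarith) (le_max_right _ _)
  have ha'b : a' < b := max_lt hab (by linarith)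
  obtain ⟨y, hy⟩ := NormedField.exists_one_lt_norm K
  have hy0 : y ≠ 0 := by
    intro h
    rw [h] at hy
    simp at hy
    linarith
  have hL : 0 < Real.log ‖y‖ := Real.log_pos hy
  obtain ⟨q, hq1, hq2⟩ := exists_rat_btwn
    (show Real.log a' / Real.log ‖y‖ < Real.log b / Real.log ‖y‖ from
      div_lt_div_of_pos_right (Real.log_lt_log ha'0 ha'b) hL)
  have hq1' : Real.log a' < (q : ℝ) * Real.log ‖y‖ := (div_lt_iff₀ hL).1 hq1
  have hq2' : (q : ℝ) * Real.log ‖y‖ < Real.log b := (lt_div_iff₀ hL).1 hq2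
  obtain ⟨u, hu⟩ := IsAlgClosed.exists_pow_nat_eq (y ^ (q.num : ℤ)) q.pos
  have hu0 : u ≠ 0 := by
    intro h
    rw [h] at hu
    exact zpow_ne_zero _ hy0 (by simpa using hu.symm)
  have hupos : (0:ℝ) < ‖u‖ := norm_pos_iff.2 hu0
  have hlogu : Real.log ‖u‖ = (q : ℝ) * Real.log ‖y‖ := by
    have h1 : ‖u‖ ^ (q.den : ℕ) = ‖y‖ ^ (q.num : ℤ) := by
      rw [← norm_pow, hu, norm_zpow]
    have h2 : (q.den : ℝ) * Real.log ‖u‖ = (q.num : ℝ) * Real.log ‖y‖ := by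
      have := congrArg Real.log h1
      rwa [Real.log_pow, Real.log_zpow] at this
    have hden : (q.den : ℝ) ≠ 0 := by
      exact_mod_cast q.den_nz
    have hcast : (q : ℝ) = (q.num : ℝ) / (q.den : ℝ) := by rw [Rat.cast_def]
    rw [hcast]
    field_simp
    linarith [h2]
  refine ⟨u, ?_, ?_⟩
  · have h3 : a' < ‖u‖ := (Real.log_lt_log_iff ha'0 hupos).1 (by rw [hlogu]; exact hq1')
    exact lt_of_le_of_lt (le_max_left a (b / 2)) h3
  · exact (Real.log_lt_log_iff hupos hb0).1 (by rw [hlogu]; exact hq2')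

end BerkDense

end BerkAux7
section BerkAux8

variable {K : Type*} [NontriviallyNormedField K] [IsAlgClosed K] [CompleteSpace K]
  [IsUltrametricDist K]

namespace BerkDense

open BerkA1

lemma avoid_finset (F : Finset ℝ) : ∀ (a b : ℝ), a < b →
    ∃ a' b', a ≤ a' ∧ b' ≤ b ∧ a' < b' ∧ ∀ y ∈ F, y ∉ Set.Ioo a' b' := by
  induction F using Finset.induction_on with
  | empty => exact fun a b h => ⟨a, b, le_rfl, le_rfl, h, by simp⟩
  | @insert c F hc ih =>
    intro a b h
    obtain ⟨a', b', h1, h2, h3, h4⟩ := ih a b h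
    by_cases hcm : c ∈ Set.Ioo a' b'
    · refine ⟨a', c, h1, le_trans hcm.2.le h2, hcm.1, fun y hy => ?_⟩
      rcases Finset.mem_insert.1 hy with rfl | hy
      · rintro ⟨_, h6⟩
        exact absurd h6 (lt_irrefl _)
      · rintro ⟨h5, h6⟩
        exact h4 y hy ⟨h5, lt_trans h6 hcm.2⟩
    · refine ⟨a', b', h1, h2, h3, fun y hy => ?_⟩
      rcases Finset.mem_insert.1 hy with rfl | hy
      · exact hcm
      · exact h4 y hy

lemma norm_add_eq_right {u v : K} (h : ‖u‖ < ‖v‖) : ‖v + u‖ = ‖v‖ := by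
  refine le_antisymm (le_trans (IsUltrametricDist.norm_add_le_max v u) (by simp [h.le])) ?_
  have h1 : ‖v‖ ≤ max ‖v + u‖ ‖u‖ := by
    simpa using IsUltrametricDist.norm_add_le_max (v + u) (-u)
  rcases max_cases ‖v + u‖ ‖u‖ with ⟨he, _⟩ | ⟨he, _⟩
  · rwa [he] at h1
  · rw [he] at h1
    linarith

lemma find_point (x : BerkA1 K) (T : Finset K) {δ : ℝ} (hδ : 0 < δ) :
    ∃ a : K, ∀ c ∈ T, x.toFun (Polynomial.X - Polynomial.C c) ≤ ‖a - c‖ ∧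
      ‖a - c‖ ≤ x.toFun (Polynomial.X - Polynomial.C c) + δ := by
  rcases T.eq_empty_or_nonempty with rfl | hne
  · exact ⟨0, by simp⟩
  set r : K → ℝ := fun c => x.toFun (Polynomial.X - Polynomial.C c) with hrdef
  obtain ⟨c₁, hc₁T, hmin⟩ := T.exists_min_image r hne
  have hr0 : ∀ c, 0 ≤ r c := fun c => x.nonneg' _
  -- r c = max (r c₁) ‖c₁ - c‖ for all c ∈ T
  have hkey : ∀ c ∈ T, r c = max (r c₁) ‖c₁ - c‖ := by
    intro c hc
    have hC : (Polynomial.C (c₁ - c) : Polynomial K)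
        = (Polynomial.X - Polynomial.C c) - (Polynomial.X - Polynomial.C c₁) := by
      rw [map_sub]
      ring
    have hnorm : ‖c₁ - c‖ = x.toFun (Polynomial.C (c₁ - c)) := (x.restricts' _).symm
    have le1 : ‖c₁ - c‖ ≤ r c := by
      rw [hnorm, hC]
      refine le_trans (nonarch_sub x _ _) ?_
      exact max_le le_rfl (hmin c hc)
    have le2 : r c ≤ max (r c₁) ‖c₁ - c‖ := by
      have hXc : Polynomial.X - Polynomial.C c
          = (Polynomial.X - Polynomial.C c₁) + Polynomial.C (c₁ - c) := by
        rw [map_sub]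
        ring
      calc r c = x.toFun ((Polynomial.X - Polynomial.C c₁) + Polynomial.C (c₁ - c)) := by
            rw [hrdef]; rw [← hXc]
        _ ≤ max (r c₁) (x.toFun (Polynomial.C (c₁ - c))) := nonarch x _ _
        _ = max (r c₁) ‖c₁ - c‖ := by rw [← hnorm]
    exact le_antisymm le2 (max_le (hmin c hc) le1)
  -- choose the radius s avoiding finitely many forbidden values
  obtain ⟨a', b', ha1, hb1, hab, havoid⟩ :=
    avoid_finset (T.image fun c => ‖c₁ - c‖) (r c₁) (r c₁ + δ) (by linarith)
  obtain ⟨tt, htt1, htt2⟩ := norm_dense K a' b' (le_trans (hr0 c₁) ha1) hab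
  refine ⟨c₁ + tt, fun c hc => ?_⟩
  have hs1 : r c₁ < ‖tt‖ := lt_of_le_of_lt ha1 htt1
  have hs2 : ‖tt‖ < r c₁ + δ := lt_of_lt_of_le htt2 hb1
  have hsF : ‖c₁ - c‖ ≠ ‖tt‖ := by
    intro h
    exact havoid ‖c₁ - c‖ (Finset.mem_image_of_mem _ hc) (h ▸ ⟨htt1, htt2⟩)
  have hac : c₁ + tt - c = tt + (c₁ - c) := by ring
  show r c ≤ ‖c₁ + tt - c‖ ∧ ‖c₁ + tt - c‖ ≤ r c + δ
  rw [hkey c hc, hac]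
  rcases lt_or_gt_of_ne hsF with hlt | hgt
  · -- ‖c₁ - c‖ < ‖tt‖ : ‖tt + (c₁ - c)‖ = ‖tt‖
    rw [norm_add_eq_right hlt]
    constructor
    · exact max_le hs1.le hlt.le
    · have : r c₁ ≤ max (r c₁) ‖c₁ - c‖ := le_max_left _ _
      linarith
  · -- ‖tt‖ < ‖c₁ - c‖ : ‖tt + (c₁ - c)‖ = ‖c₁ - c‖
    have h1 : ‖tt + (c₁ - c)‖ = ‖c₁ - c‖ := by
      rw [add_comm]
      exact norm_add_eq_right hgt
    rw [h1, max_eq_right (by linarith : r c₁ ≤ ‖c₁ - c‖)]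
    exact ⟨le_rfl, by linarith⟩

lemma prod_pert (δ Mb : ℝ) (hδ0 : 0 ≤ δ) (hδ1 : δ ≤ 1) (hMb : 0 ≤ Mb) (u v : K → ℝ) :
    ∀ (s : Multiset K), (∀ c ∈ s, 0 ≤ u c ∧ u c ≤ v c ∧ v c ≤ u c + δ ∧ u c ≤ Mb) →
      (0 ≤ (s.map u).prod ∧ (s.map u).prod ≤ (s.map v).prod) ∧
        (s.map v).prod ≤ (Mb + 1) ^ Multiset.card s ∧
          (s.map v).prod ≤ (s.map u).prod + δ * Multiset.card s * (Mb + 1) ^ Multiset.card s := by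
  intro s
  induction s using Multiset.induction_on with
  | empty => intro _; simp
  | @cons c s ih =>
    intro h
    obtain ⟨hc0, hcuv, hcv, hcM⟩ := h c (Multiset.mem_cons_self c s)
    obtain ⟨⟨hu0, huv⟩, hvB, hvu⟩ := ih (fun c' hc' => h c' (Multiset.mem_cons_of_mem hc'))
    have hv0 : 0 ≤ (Multiset.map v s).prod := le_trans hu0 huv
    have hvc0 : 0 ≤ v c := le_trans hc0 hcuv
    set k := Multiset.card s with hk
    have hMB : (0:ℝ) ≤ (Mb + 1) ^ k := by positivity
    have huBk : (Multiset.map u s).prod ≤ (Mb + 1) ^ k := le_trans huv hvB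
    simp only [Multiset.map_cons, Multiset.prod_cons, Multiset.card_cons]
    refine ⟨⟨mul_nonneg hc0 hu0, mul_le_mul hcuv huv hu0 hvc0⟩, ?_, ?_⟩
    · calc v c * (Multiset.map v s).prod ≤ (Mb + 1) * (Mb + 1) ^ k :=
          mul_le_mul (by linarith) hvB hv0 (by linarith)
        _ = (Mb + 1) ^ (k + 1) := by rw [pow_succ]; ring
    · have hstep : v c * (Multiset.map v s).prod
          ≤ (u c + δ) * ((Multiset.map u s).prod + δ * k * (Mb + 1) ^ k) :=
        mul_le_mul hcv hvu hv0 (by linarith)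
      have t1 : u c * (δ * (k:ℝ) * (Mb + 1) ^ k) ≤ Mb * (δ * (k:ℝ) * (Mb + 1) ^ k) :=
        mul_le_mul_of_nonneg_right hcM (by positivity)
      have t2 : δ * (Multiset.map u s).prod ≤ δ * (Mb + 1) ^ k :=
        mul_le_mul_of_nonneg_left huBk hδ0
      have t3 : δ * (δ * (k:ℝ) * (Mb + 1) ^ k) ≤ δ * ((k:ℝ) * (Mb + 1) ^ k) := by
        refine mul_le_mul_of_nonneg_left ?_ hδ0
        have : δ * ((k:ℝ) * (Mb + 1) ^ k) ≤ 1 * ((k:ℝ) * (Mb + 1) ^ k) :=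
          mul_le_mul_of_nonneg_right hδ1 (by positivity)
        linarith
      have c1 : Mb * (k:ℝ) * δ + 1 * δ + (k:ℝ) * δ ≤ ((k:ℝ) + 1) * (Mb + 1) * δ := by
        nlinarith [mul_nonneg hMb hδ0]
      have c3 : δ * ((Mb * (k:ℝ) + 1 + (k:ℝ)) * (Mb + 1) ^ k)
          ≤ δ * ((((k:ℝ) + 1) * (Mb + 1)) * (Mb + 1) ^ k) := by
        refine mul_le_mul_of_nonneg_left (mul_le_mul_of_nonneg_right ?_ hMB) hδ0
        nlinarith [hMb]
      calc v c * (Multiset.map v s).prod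
          ≤ (u c + δ) * ((Multiset.map u s).prod + δ * (k:ℝ) * (Mb + 1) ^ k) := hstep
        _ = u c * (Multiset.map u s).prod + (u c * (δ * (k:ℝ) * (Mb + 1) ^ k)
            + δ * (Multiset.map u s).prod + δ * (δ * (k:ℝ) * (Mb + 1) ^ k)) := by ring
        _ ≤ u c * (Multiset.map u s).prod + δ * ((Mb * (k:ℝ) + 1 + (k:ℝ)) * (Mb + 1) ^ k) := by
            have e1 : u c * (δ * (k:ℝ) * (Mb + 1) ^ k) + δ * (Multiset.map u s).prod
                + δ * (δ * (k:ℝ) * (Mb + 1) ^ k)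
                ≤ Mb * (δ * (k:ℝ) * (Mb + 1) ^ k) + δ * (Mb + 1) ^ k
                  + δ * ((k:ℝ) * (Mb + 1) ^ k) := by linarith
            have e2 : Mb * (δ * (k:ℝ) * (Mb + 1) ^ k) + δ * (Mb + 1) ^ k
                + δ * ((k:ℝ) * (Mb + 1) ^ k)
                = δ * ((Mb * (k:ℝ) + 1 + (k:ℝ)) * (Mb + 1) ^ k) := by ring
            linarith
        _ ≤ u c * (Multiset.map u s).prod + δ * ((((k:ℝ) + 1) * (Mb + 1)) * (Mb + 1) ^ k) := by
            linarith
        _ = u c * (Multiset.map u s).prod + δ * ((k:ℝ) + 1) * (Mb + 1) ^ (k + 1) := by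
            rw [pow_succ]
            ring
        _ = u c * (Multiset.map u s).prod + δ * ((Multiset.card s : ℝ) + 1)
            * (Mb + 1) ^ (Multiset.card s + 1) := by rw [← hk]
        _ = u c * (Multiset.map u s).prod + δ * ((Multiset.card s + 1 : ℕ) : ℝ)
            * (Mb + 1) ^ (Multiset.card s + 1) := by push_cast; ring

end BerkDense

end BerkAux8
section BerkAux9

variable {K : Type*} [NontriviallyNormedField K] [IsAlgClosed K] [CompleteSpace K]
  [IsUltrametricDist K]

namespace BerkDense

open BerkA1

lemma xprod (x : BerkA1 K) (s : Multiset K) :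
    x.toFun (s.map (fun c => Polynomial.X - Polynomial.C c)).prod
      = (s.map (fun c => x.toFun (Polynomial.X - Polynomial.C c))).prod := by
  induction s using Multiset.induction_on with
  | empty => simpa using BerkA1.one_eq x
  | @cons c s ih =>
    simp only [Multiset.map_cons, Multiset.prod_cons, x.map_mul', ih]

lemma xfactor (x : BerkA1 K) (p : Polynomial K) :
    x.toFun p = ‖p.leadingCoeff‖ *
      (p.roots.map (fun c => x.toFun (Polynomial.X - Polynomial.C c))).prod := by
  conv_lhs => rw [(IsAlgClosed.splits p).eq_prod_roots]
  rw [x.map_mul', x.restricts', xprod]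

lemma norm_multiset_prod' (s : Multiset K) : ‖s.prod‖ = (s.map (fun z : K => ‖z‖)).prod := by
  induction s using Multiset.induction_on with
  | empty => simp
  | @cons c s ih => simp [norm_mul, ih]

lemma evalfactor (p : Polynomial K) (a : K) :
    ‖p.eval a‖ = ‖p.leadingCoeff‖ * (p.roots.map (fun c => ‖a - c‖)).prod := by
  conv_lhs => rw [(IsAlgClosed.splits p).eq_prod_roots]
  rw [Polynomial.eval_mul, Polynomial.eval_C, norm_mul]
  congr 1
  rw [Polynomial.eval_multiset_prod, norm_multiset_prod', Multiset.map_map, Multiset.map_map]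
  refine congrArg Multiset.prod (Multiset.map_congr rfl (fun c _ => ?_))
  simp

lemma key (x : BerkA1 K) (I : Finset (Polynomial K)) {ε : ℝ} (hε : 0 < ε) :
    ∃ a : K, ∀ p ∈ I, |‖p.eval a‖ - x.toFun p| < ε := by
  classical
  set T : Finset K := I.biUnion (fun p => p.roots.toFinset) with hT
  set r : K → ℝ := fun c => x.toFun (Polynomial.X - Polynomial.C c) with hr
  set Mb : ℝ := ∑ c ∈ T, r c with hMbdef
  have hMb0 : 0 ≤ Mb := Finset.sum_nonneg fun c _ => x.nonneg' _
  have hrMb : ∀ c ∈ T, r c ≤ Mb := fun c hc =>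
    Finset.single_le_sum (f := r) (fun c' _ => x.nonneg' _) hc
  set nmax : ℕ := ∑ p ∈ I, Multiset.card p.roots with hnmaxdef
  set Lc : ℝ := 1 + ∑ p ∈ I, ‖p.leadingCoeff‖ with hLcdef
  have hLc1 : 1 ≤ Lc := by
    have : (0:ℝ) ≤ ∑ p ∈ I, ‖p.leadingCoeff‖ := Finset.sum_nonneg fun _ _ => norm_nonneg _
    rw [hLcdef]
    linarith
  have hLcge : ∀ p ∈ I, ‖p.leadingCoeff‖ ≤ Lc := by
    intro p hp
    have := Finset.single_le_sum (f := fun q : Polynomial K => ‖q.leadingCoeff‖)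
      (fun q _ => norm_nonneg _) hp
    rw [hLcdef]
    linarith
  set C0 : ℝ := Lc * ((nmax : ℝ) * (Mb + 1) ^ nmax) with hC0def
  have hC00 : 0 ≤ C0 := by
    rw [hC0def]
    refine mul_nonneg (by linarith) (mul_nonneg (Nat.cast_nonneg _) (by positivity))
  set δ : ℝ := min 1 (ε / (C0 + 1)) with hδdef
  have hδ0 : 0 < δ := lt_min one_pos (div_pos hε (by linarith))
  have hδ1 : δ ≤ 1 := min_le_left _ _
  obtain ⟨a, ha⟩ := find_point x T hδ0
  refine ⟨a, fun p hp => ?_⟩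
  have hmem : ∀ c ∈ p.roots, c ∈ T := fun c hc =>
    Finset.mem_biUnion.2 ⟨p, hp, Multiset.mem_toFinset.2 hc⟩
  obtain ⟨⟨hu0, huv⟩, hvB, hvu⟩ := prod_pert δ Mb hδ0.le hδ1 hMb0 r (fun c => ‖a - c‖) p.roots
    (fun c hc => ⟨x.nonneg' _, (ha c (hmem c hc)).1, (ha c (hmem c hc)).2, hrMb c (hmem c hc)⟩)
  have hcard : Multiset.card p.roots ≤ nmax := by
    rw [hnmaxdef]
    exact Finset.single_le_sum (f := fun q : Polynomial K => Multiset.card q.roots)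
      (fun _ _ => Nat.zero_le _) hp
  have habs : |(p.roots.map (fun c => ‖a - c‖)).prod - (p.roots.map r).prod|
      ≤ δ * (Multiset.card p.roots : ℝ) * (Mb + 1) ^ (Multiset.card p.roots) := by
    rw [abs_of_nonneg (by linarith)]
    linarith
  have hmono : δ * (Multiset.card p.roots : ℝ) * (Mb + 1) ^ (Multiset.card p.roots)
      ≤ δ * (nmax : ℝ) * (Mb + 1) ^ nmax := by
    refine mul_le_mul (mul_le_mul_of_nonneg_left (by exact_mod_cast hcard) hδ0.le)
      (pow_le_pow_right₀ (by linarith) hcard) (by positivity)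
      (mul_nonneg hδ0.le (Nat.cast_nonneg _))
  have hfac1 : x.toFun p = ‖p.leadingCoeff‖ * ((p.roots.map r).prod) := xfactor x p
  have hfac2 : ‖p.eval a‖ = ‖p.leadingCoeff‖ * ((p.roots.map (fun c => ‖a - c‖)).prod) :=
    evalfactor p a
  rw [hfac1, hfac2, ← mul_sub, abs_mul, abs_of_nonneg (norm_nonneg _)]
  calc ‖p.leadingCoeff‖ * |(p.roots.map (fun c => ‖a - c‖)).prod - (p.roots.map r).prod|
      ≤ Lc * (δ * (nmax : ℝ) * (Mb + 1) ^ nmax) := by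
        refine mul_le_mul (hLcge p hp) (le_trans habs hmono) (abs_nonneg _) (by linarith)
    _ = δ * C0 := by rw [hC0def]; ring
    _ ≤ (ε / (C0 + 1)) * C0 := mul_le_mul_of_nonneg_right (min_le_right _ _) hC00
    _ < ε := by
        rw [div_mul_eq_mul_div, div_lt_iff₀ (by linarith : (0:ℝ) < C0 + 1)]
        have : (0:ℝ) < ε := hε
        nlinarith
  done

lemma dense_evalSeminorm : Dense (Set.range (evalSeminorm K)) := by
  rw [dense_iff_inter_open]
  intro U hU hUne
  obtain ⟨x, hxU⟩ := hUne
  obtain ⟨V, hV, hpre⟩ := isOpen_induced_iff.1 hU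
  have hxV : x.toFun ∈ V := by
    rw [← hpre] at hxU
    exact hxU
  obtain ⟨I, u, hIu, hsub⟩ := isOpen_pi_iff.1 hV _ hxV
  have hball : ∀ p : {q // q ∈ I}, ∃ ε > 0, Metric.ball (x.toFun p.1) ε ⊆ u p.1 := fun p =>
    Metric.isOpen_iff.1 (hIu p.1 p.2).1 _ (hIu p.1 p.2).2
  choose εf hεf hballf using hball
  rcases I.eq_empty_or_nonempty with rfl | hIne
  · refine ⟨evalSeminorm K 0, ?_, ⟨0, rfl⟩⟩
    rw [← hpre]
    exact hsub (by simp)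
  · have hattne : I.attach.Nonempty := Finset.attach_nonempty_iff.2 hIne
    obtain ⟨p₀, _, hmin⟩ := I.attach.exists_min_image εf hattne
    obtain ⟨a, ha⟩ := key x I (hεf p₀)
    refine ⟨evalSeminorm K a, ?_, ⟨a, rfl⟩⟩
    rw [← hpre]
    refine hsub ?_
    intro p hp
    refine hballf ⟨p, hp⟩ ?_
    rw [Metric.mem_ball, Real.dist_eq]
    have h1 := ha p hp
    have h2 : εf p₀ ≤ εf ⟨p, hp⟩ := hmin ⟨p, hp⟩ (Finset.mem_attach _ _)
    calc |(evalSeminorm K a).toFun p - x.toFun p| = |‖p.eval a‖ - x.toFun p| := rfl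
      _ < εf p₀ := h1
      _ ≤ εf ⟨p, hp⟩ := h2

lemma dense_iota : Dense (Set.range (iota K)) := by
  rw [dense_iff_inter_open]
  intro U hU hUne
  obtain ⟨S, hSU⟩ := hUne
  induction S using OnePoint.rec with
  | infty => exact ⟨OnePoint.infty, hSU, ⟨OnePoint.infty, rfl⟩⟩
  | coe x =>
    have hpreopen : IsOpen ((fun y : BerkA1 K => (y : BerkP1 K)) ⁻¹' U) :=
      (OnePoint.isOpenEmbedding_coe.continuous).isOpen_preimage U hU
    have hne : ((fun y : BerkA1 K => (y : BerkP1 K)) ⁻¹' U).Nonempty := ⟨x, hSU⟩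
    obtain ⟨y, hy1, a, rfl⟩ := dense_iff_inter_open.1 (dense_evalSeminorm (K := K)) _
      hpreopen hne
    exact ⟨((evalSeminorm K a : BerkA1 K) : BerkP1 K), hy1, ⟨(a : OnePoint K), rfl⟩⟩

end BerkDense

end BerkAux9
/-- For rational functions `f̃, g̃` of positive degree, the function
`z ↦ [f̃(z), g̃(z)]` on `P^1(K)` extends to a continuous function `P^1_Berk(K) → [0,1]`,
and the extension is unique (classical points being dense). -/
theorem chordal_pair_extends_continuously (f g : RatFunc K)
    (hf : 0 < rdeg K f) (hg : 0 < rdeg K g) :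
    ∃ Φ : BerkP1 K → ℝ, Continuous Φ ∧ (∀ S : BerkP1 K, Φ S ∈ Set.Icc (0 : ℝ) 1) ∧
      (∀ w : OnePoint K, Φ (iota K w) = chordal K (evalP1 K f w) (evalP1 K g w)) ∧
      ∀ Ψ : BerkP1 K → ℝ, Continuous Ψ →
        (∀ w : OnePoint K, Ψ (iota K w) = chordal K (evalP1 K f w) (evalP1 K g w)) →
          Ψ = Φ := by
  refine ⟨BerkPhi.Phi f g, BerkPhi.Phi_continuous f g hf, BerkPhi.Phi_mem_Icc f g,
    fun w => BerkPhi.Phi_iota f g w, fun Ψ hΨ hag => ?_⟩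
  refine hΨ.ext_on (BerkDense.dense_iota (K := K)) (BerkPhi.Phi_continuous f g hf) ?_
  rintro S ⟨w, rfl⟩
  rw [hag w, BerkPhi.Phi_iota f g w]
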